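/- Let X = {x₁ < ... < xₙ} and for I = {i₁ < ... < i_ℓ} ⊆ {1,...,n}, let FT(X)^I denote the set of elements of FT(X) whose set of right descents is exactly I (where i is a right descent of u if u·x_i = u). Then |FT(X)^I| = Π_{i∈I} a(i−1), where a(0)=1 and a(k)=a(k−1)²+a(k−1). In particular, the minimal ideal of FT(X) has cardinality a(1)·a(2)···a(n−1). -/

import Mathlib

/-- The defining relations of the free tree monoid `FT(X)`: `x·x = x` for every `x`, and
`y·x·y = y·x` whenever `x < y`. -/
def ftRel (X : Type*) [LinearOrder X] : FreeMonoid X → FreeMonoid X → Prop := fun a b =>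
  (∃ x : X, a = FreeMonoid.of x * FreeMonoid.of x ∧ b = FreeMonoid.of x) ∨
  (∃ x y : X, x < y ∧ a = FreeMonoid.of y * FreeMonoid.of x * FreeMonoid.of y ∧
    b = FreeMonoid.of y * FreeMonoid.of x)

/-- The free tree monoid `FT(X)` on a totally ordered alphabet `X`. -/
def FreeTreeMonoid (X : Type*) [LinearOrder X] :=
  (conGen (ftRel X)).Quotient

noncomputable instance (X : Type*) [LinearOrder X] : Monoid (FreeTreeMonoid X) :=
  Con.monoid (conGen (ftRel X))

/-- The image in `FT(X)` of the generator `x ∈ X`. -/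
def ftGen {X : Type*} [LinearOrder X] (x : X) : FreeTreeMonoid X :=
  (conGen (ftRel X)).mk' (FreeMonoid.of x)

/-- The counting sequence `a(0) = 1`, `a(k) = a(k-1)² + a(k-1)`. -/
def ftCount : ℕ → ℕ
  | 0 => 1
  | k + 1 => ftCount k ^ 2 + ftCount k

namespace FTAux

variable {X : Type*} [LinearOrder X]

lemma mkEq {a b : FreeMonoid X} (h : ftRel X a b) :
    (conGen (ftRel X)).mk' a = (conGen (ftRel X)).mk' b :=
  (Con.eq _).2 (ConGen.Rel.of a b h)

lemma ftGen_sq (x : X) : ftGen x * ftGen x = ftGen x := by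
  have := mkEq (Or.inl ⟨x, rfl, rfl⟩ : ftRel X (FreeMonoid.of x * FreeMonoid.of x) (FreeMonoid.of x))
  rw [map_mul] at this
  exact this

lemma ftGen_rel2 {x y : X} (h : x < y) :
    ftGen y * ftGen x * ftGen y = ftGen y * ftGen x := by
  have := mkEq (Or.inr ⟨x, y, h, rfl, rfl⟩ :
    ftRel X (FreeMonoid.of y * FreeMonoid.of x * FreeMonoid.of y)
      (FreeMonoid.of y * FreeMonoid.of x))
  rw [map_mul, map_mul] at this
  exact this

noncomputable def liftT {M : Type*} [Monoid M] (f : X → M)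
    (h1 : ∀ x, f x * f x = f x) (h2 : ∀ x y, x < y → f y * f x * f y = f y * f x) :
    FreeTreeMonoid X →* M :=
  Con.lift _ (FreeMonoid.lift f) (Con.conGen_le.2 (by
    intro a b hab
    rcases hab with (⟨x, rfl, rfl⟩ | ⟨x, y, hxy, rfl, rfl⟩)
    · simp [Con.ker_rel, map_mul, h1]
    · simp [Con.ker_rel, map_mul, h2 _ _ hxy]))

@[simp] lemma liftT_gen {M : Type*} [Monoid M] (f : X → M) (h1) (h2) (x : X) :
    liftT f h1 h2 (ftGen x) = f x := by
  show Con.lift _ (FreeMonoid.lift f) _ ((conGen (ftRel X)).mk' (FreeMonoid.of x)) = f x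
  rw [Con.lift_mk']
  simp

lemma hom_ext {M : Type*} [Monoid M] {F G : FreeTreeMonoid X →* M}
    (h : ∀ x, F (ftGen x) = G (ftGen x)) : F = G := by
  have h2 : F.comp (conGen (ftRel X)).mk' = G.comp (conGen (ftRel X)).mk' :=
    FreeMonoid.hom_eq fun x => h x
  ext u
  obtain ⟨w, rfl⟩ := Con.mk'_surjective (c := conGen (ftRel X)) u
  exact DFunLike.congr_fun h2 w


abbrev T (n : ℕ) := FreeTreeMonoid (Fin n)

abbrev NN (n : ℕ) := T n ⊕ T n × T n

variable {n : ℕ}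

noncomputable def nmul : NN n → NN n → NN n
  | .inl a, .inl b => .inl (a * b)
  | .inl a, .inr (u, v) => .inr (a * u, v)
  | .inr (u, v), .inl b => .inr (u, v * b)
  | .inr (u, v), .inr (u', v') => .inr (u, v * u' * v')

noncomputable instance : Monoid (NN n) where
  mul := nmul
  one := .inl 1
  mul_assoc a b c := by
    show nmul (nmul a b) c = nmul a (nmul b c)
    rcases a with a | ⟨u, v⟩ <;> rcases b with b | ⟨u', v'⟩ <;> rcases c with c | ⟨u'', v''⟩ <;>
      simp [nmul, mul_assoc]
  one_mul a := by
    show nmul (.inl 1) a = a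
    rcases a with a | ⟨u, v⟩ <;> simp [nmul]
  mul_one a := by
    show nmul a (.inl 1) = a
    rcases a with a | ⟨u, v⟩ <;> simp [nmul]

@[simp] lemma inl_mul_inl (a b : T n) :
    (Sum.inl a : NN n) * (Sum.inl b : NN n) = Sum.inl (a * b) := rfl
@[simp] lemma inl_mul_inr (a : T n) (p : T n × T n) :
    (Sum.inl a : NN n) * (Sum.inr p : NN n) = Sum.inr (a * p.1, p.2) := rfl
@[simp] lemma inr_mul_inl (p : T n × T n) (b : T n) :
    (Sum.inr p : NN n) * (Sum.inl b : NN n) = Sum.inr (p.1, p.2 * b) := rfl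
@[simp] lemma inr_mul_inr (p q : T n × T n) :
    (Sum.inr p : NN n) * (Sum.inr q : NN n) = Sum.inr (p.1, p.2 * q.1 * q.2) := rfl
@[simp] lemma one_def : (1 : NN n) = Sum.inl 1 := rfl

noncomputable def mkT (n : ℕ) : FreeMonoid (Fin n) →* T n := (conGen (ftRel (Fin n))).mk'

lemma mkT_surjective : Function.Surjective (mkT n) :=
  Con.mk'_surjective (c := conGen (ftRel (Fin n)))

@[simp] lemma mkT_of (x : Fin n) : mkT n (FreeMonoid.of x) = ftGen x := rfl

noncomputable def iota (n : ℕ) : T n →* T (n + 1) :=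
  liftT (fun i => ftGen i.castSucc) (fun _ => ftGen_sq _)
    (fun _ _ h => ftGen_rel2 (Fin.castSucc_lt_castSucc_iff.2 h))

@[simp] lemma iota_gen (j : Fin n) : iota n (ftGen j) = ftGen j.castSucc := liftT_gen _ _ _ _

noncomputable def phi (n : ℕ) : T (n + 1) →* NN n :=
  liftT (fun i => Fin.lastCases (Sum.inr (1, 1)) (fun j => Sum.inl (ftGen j)) i)
    (by
      intro x
      induction x using Fin.lastCases with
      | last => simp
      | cast j => simp [ftGen_sq])
    (by
      intro x y hxy
      induction y using Fin.lastCases with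
      | last =>
        induction x using Fin.lastCases with
        | last => exact absurd hxy (lt_irrefl _)
        | cast j => simp
      | cast j' =>
        induction x using Fin.lastCases with
        | last => exact absurd (lt_trans (Fin.castSucc_lt_last j') hxy) (lt_irrefl _)
        | cast j =>
          simp only [Fin.lastCases_castSucc, inl_mul_inl]
          rw [ftGen_rel2 (Fin.castSucc_lt_castSucc_iff.1 hxy)])

@[simp] lemma phi_gen_cast (j : Fin n) : phi n (ftGen j.castSucc) = Sum.inl (ftGen j) := by
  rw [phi, liftT_gen]; simp

@[simp] lemma phi_gen_last : phi n (ftGen (Fin.last n)) = Sum.inr (1, 1) := by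
  rw [phi, liftT_gen]; simp

noncomputable def tt (n : ℕ) : T (n + 1) := ftGen (Fin.last n)

lemma t_sandwich (a : T (n + 1)) : tt n * a * tt n = tt n * a := by
  obtain ⟨w, rfl⟩ := mkT_surjective (n := n + 1) a
  induction w using FreeMonoid.recOn with
  | one => simpa [tt] using ftGen_sq (Fin.last n)
  | of_mul x xs IH =>
    rw [map_mul, mkT_of]
    set W : T (n + 1) := mkT (n + 1) xs with hW
    rcases eq_or_lt_of_le (Fin.le_last x) with hx | hx
    · subst hx
      have ht : tt n * tt n = tt n := ftGen_sq _
      calc tt n * (tt n * W) * tt n = (tt n * tt n) * W * tt n := by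
            simp only [mul_assoc]
        _ = tt n * W * tt n := by rw [ht]
        _ = tt n * W := IH
        _ = (tt n * tt n) * W := by rw [ht]
        _ = tt n * (tt n * W) := by rw [mul_assoc]
    · have h1 : tt n * ftGen x * tt n = tt n * ftGen x := ftGen_rel2 hx
      calc tt n * (ftGen x * W) * tt n = tt n * ftGen x * W * tt n := by
            simp only [mul_assoc]
        _ = (tt n * ftGen x * tt n) * W * tt n := by rw [h1]
        _ = (tt n * ftGen x) * (tt n * W * tt n) := by simp only [mul_assoc]
        _ = (tt n * ftGen x) * (tt n * W) := by rw [IH]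
        _ = (tt n * ftGen x * tt n) * W := by simp only [mul_assoc]
        _ = tt n * ftGen x * W := by rw [h1]
        _ = tt n * (ftGen x * W) := by rw [mul_assoc]

noncomputable def psiFun : NN n → T (n + 1)
  | .inl a => iota n a
  | .inr (u, v) => iota n u * tt n * iota n v

@[simp] lemma psiFun_inl (a : T n) : psiFun (Sum.inl a) = iota n a := rfl
@[simp] lemma psiFun_inr (p : T n × T n) :
    (psiFun (Sum.inr p) : T (n + 1)) = iota n p.1 * tt n * iota n p.2 := rfl

noncomputable def psi (n : ℕ) : NN n →* T (n + 1) where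
  toFun := psiFun
  map_one' := by simp
  map_mul' x y := by
    rcases x with a | ⟨u, v⟩ <;> rcases y with b | ⟨u', v'⟩
    · simp [map_mul]
    · simp [map_mul, mul_assoc]
    · simp [map_mul, mul_assoc]
    · simp only [inr_mul_inr, psiFun_inr, map_mul]
      have h := t_sandwich (n := n) (iota n v * iota n u')
      have h2 := congrArg (fun z => iota n u * (z * iota n v')) h
      simp only [mul_assoc] at h2 ⊢
      exact h2.symm

@[simp] lemma psi_inl (a : T n) : psi n (Sum.inl a) = iota n a := rfl
@[simp] lemma psi_inr (p : T n × T n) : psi n (Sum.inr p) = iota n p.1 * tt n * iota n p.2 := rfl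

noncomputable def inlHom (n : ℕ) : T n →* NN n where
  toFun := Sum.inl
  map_one' := rfl
  map_mul' _ _ := rfl

lemma phi_iota : (phi n).comp (iota n) = inlHom n := by
  apply hom_ext
  intro j
  simp [inlHom]; rfl

lemma phi_iota_apply (a : T n) : phi n (iota n a) = Sum.inl a :=
  DFunLike.congr_fun phi_iota a

noncomputable def equivNN (n : ℕ) : T (n + 1) ≃* NN n :=
  MonoidHom.toMulEquiv (phi n) (psi n)
    (by
      apply hom_ext
      intro i
      induction i using Fin.lastCases with
      | last => simp [tt]
      | cast j => simp)
    (by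
      ext x
      rcases x with a | ⟨u, v⟩
      · simpa using phi_iota_apply a
      · simp [map_mul, phi_iota_apply, tt])

@[simp] lemma equivNN_gen_cast (j : Fin n) :
    equivNN n (ftGen j.castSucc) = Sum.inl (ftGen j) := phi_gen_cast j

@[simp] lemma equivNN_gen_last :
    equivNN n (ftGen (Fin.last n)) = Sum.inr (1, 1) := phi_gen_last


lemma unique0 : ∀ u : T 0, u = 1 := by
  intro u
  obtain ⟨w, rfl⟩ := mkT_surjective (n := 0) u
  induction w using FreeMonoid.recOn with
  | one => exact map_one _
  | of_mul x xs _ => exact x.elim0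

instance : Subsingleton (T 0) :=
  ⟨fun a b => (unique0 a).trans (unique0 b).symm⟩

lemma finite_card : ∀ n, Finite (T n) ∧ Nat.card (T n) = ftCount n := by
  intro n
  induction n with
  | zero =>
    refine ⟨Finite.of_subsingleton, ?_⟩
    have : Nonempty (T 0) := ⟨1⟩
    rw [Nat.card_unique, ftCount]
  | succ n IH =>
    obtain ⟨hf, hc⟩ := IH
    haveI := hf
    have e := (equivNN n).toEquiv
    refine ⟨Finite.of_equiv _ e.symm, ?_⟩
    rw [Nat.card_congr e, Nat.card_sum, Nat.card_prod, hc]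
    show ftCount n + ftCount n * ftCount n = ftCount (n + 1)
    rw [ftCount]
    ring

instance instFiniteT (n : ℕ) : Finite (T n) := (finite_card n).1

def prodSnd {A B : Type*} (P : B → Prop) : {p : A × B // P p.2} ≃ A × {b // P b} where
  toFun x := (x.1.1, ⟨x.1.2, x.2⟩)
  invFun y := ⟨(y.1, y.2.1), y.2.2⟩
  left_inv _ := rfl
  right_inv _ := rfl

lemma descent_card (n : ℕ) (I : Finset (Fin n)) :
    Nat.card {u : T n // ∀ i : Fin n, u * ftGen i = u ↔ i ∈ I} = ∏ i ∈ I, ftCount i.val := by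
  induction n with
  | zero =>
    have hI : I = ∅ := Finset.eq_empty_of_forall_notMem fun i => i.elim0
    subst hI
    rw [Finset.prod_empty, Nat.card_eq_one_iff_unique]
    exact ⟨⟨fun a b => Subtype.ext ((unique0 a.1).trans (unique0 b.1).symm)⟩,
      ⟨⟨1, fun i => i.elim0⟩⟩⟩
  | succ n IH =>
    set J : Finset (Fin n) := I.preimage Fin.castSucc (Fin.castSucc_injective n).injOn with hJ
    have hmemJ : ∀ j : Fin n, j ∈ J ↔ j.castSucc ∈ I := fun j => Finset.mem_preimage
    have E1 : {u : T (n + 1) // ∀ i, u * ftGen i = u ↔ i ∈ I} ≃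
        {x : NN n // ∀ i, x * equivNN n (ftGen i) = x ↔ i ∈ I} :=
      (equivNN n).toEquiv.subtypeEquiv (by
        intro u
        apply forall_congr'
        intro i
        have : u * ftGen i = u ↔ equivNN n u * equivNN n (ftGen i) = equivNN n u := by
          rw [← map_mul, EmbeddingLike.apply_eq_iff_eq]
        exact iff_congr this Iff.rfl)
    have Cinl : ∀ a : T n,
        (∀ i, (Sum.inl a : NN n) * equivNN n (ftGen i) = Sum.inl a ↔ i ∈ I) ↔
          (Fin.last n ∉ I ∧ ∀ j : Fin n, (a * ftGen j = a ↔ j ∈ J)) := by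
      intro a
      constructor
      · intro h
        refine ⟨fun hlast => ?_, fun j => ?_⟩
        · have := (h (Fin.last n)).2 hlast
          rw [equivNN_gen_last] at this
          simp at this
        · have := h j.castSucc
          rw [equivNN_gen_cast] at this
          simp only [inl_mul_inl, Sum.inl.injEq] at this
          rw [hmemJ]
          exact this
      · rintro ⟨hlast, hj⟩ i
        induction i using Fin.lastCases with
        | last => simp [hlast]
        | cast j =>
          simp only [equivNN_gen_cast, inl_mul_inl, Sum.inl.injEq]
          rw [← hmemJ]
          exact hj j
    have Cinr : ∀ p : T n × T n,
        (∀ i, (Sum.inr p : NN n) * equivNN n (ftGen i) = Sum.inr p ↔ i ∈ I) ↔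
          (Fin.last n ∈ I ∧ ∀ j : Fin n, (p.2 * ftGen j = p.2 ↔ j ∈ J)) := by
      intro p
      constructor
      · intro h
        refine ⟨?_, fun j => ?_⟩
        · apply (h (Fin.last n)).1
          rw [equivNN_gen_last]
          simp
        · have := h j.castSucc
          rw [equivNN_gen_cast] at this
          simp only [inr_mul_inl, Sum.inr.injEq, Prod.ext_iff, true_and] at this
          rw [hmemJ]
          simpa using this
      · rintro ⟨hlast, hj⟩ i
        induction i using Fin.lastCases with
        | last => simp [hlast]
        | cast j =>
          simp only [equivNN_gen_cast, inr_mul_inl, Sum.inr.injEq, Prod.ext_iff, true_and]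
          rw [← hmemJ j]
          simpa using hj j
    rw [Nat.card_congr (E1.trans Equiv.subtypeSum), Nat.card_sum]
    by_cases hlast : Fin.last n ∈ I
    · haveI : IsEmpty
          {a : T n // ∀ i, (Sum.inl a : NN n) * equivNN n (ftGen i) = Sum.inl a ↔ i ∈ I} :=
        ⟨fun x => ((Cinl x.1).1 x.2).1 hlast⟩
      have E3 : {p : T n × T n //
            ∀ i, (Sum.inr p : NN n) * equivNN n (ftGen i) = Sum.inr p ↔ i ∈ I} ≃
          T n × {v : T n // ∀ j : Fin n, v * ftGen j = v ↔ j ∈ J} :=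
        (Equiv.subtypeEquivRight fun p => (Cinr p).trans (and_iff_right hlast)).trans
          (prodSnd (fun v : T n => ∀ j : Fin n, v * ftGen j = v ↔ j ∈ J))
      have h0 : Nat.card
          {a : T n // ∀ i, (Sum.inl a : NN n) * equivNN n (ftGen i) = Sum.inl a ↔ i ∈ I} = 0 :=
        Nat.card_of_isEmpty
      rw [h0, Nat.card_congr E3, Nat.card_prod, (finite_card n).2, IH J, zero_add]
      have hI : I = insert (Fin.last n) (J.map Fin.castSuccEmb) := by
        ext i
        simp only [Finset.mem_insert, Finset.mem_map, Fin.coe_castSuccEmb]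
        constructor
        · intro hi
          induction i using Fin.lastCases with
          | last => exact Or.inl rfl
          | cast j => exact Or.inr ⟨j, (hmemJ j).2 hi, rfl⟩
        · rintro (rfl | ⟨j, hjJ, rfl⟩)
          · exact hlast
          · exact (hmemJ j).1 hjJ
      rw [hI, Finset.prod_insert (by
        simp only [Finset.mem_map, Fin.coe_castSuccEmb]
        rintro ⟨j, -, hj⟩
        exact absurd hj (ne_of_lt (Fin.castSucc_lt_last j))), Finset.prod_map]
      simp [Fin.val_last]
    · haveI : IsEmpty
          {p : T n × T n // ∀ i, (Sum.inr p : NN n) * equivNN n (ftGen i) = Sum.inr p ↔ i ∈ I} :=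
        ⟨fun x => hlast ((Cinr x.1).1 x.2).1⟩
      have E3 : {a : T n //
            ∀ i, (Sum.inl a : NN n) * equivNN n (ftGen i) = Sum.inl a ↔ i ∈ I} ≃
          {v : T n // ∀ j : Fin n, v * ftGen j = v ↔ j ∈ J} :=
        Equiv.subtypeEquivRight fun a => (Cinl a).trans (and_iff_right hlast)
      have h0 : Nat.card
          {p : T n × T n // ∀ i, (Sum.inr p : NN n) * equivNN n (ftGen i) = Sum.inr p ↔ i ∈ I}
          = 0 := Nat.card_of_isEmpty
      rw [h0, Nat.card_congr E3, IH J, add_zero]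
      have hI : I = J.map Fin.castSuccEmb := by
        ext i
        simp only [Finset.mem_map, Fin.coe_castSuccEmb]
        constructor
        · intro hi
          induction i using Fin.lastCases with
          | last => exact absurd hi hlast
          | cast j => exact ⟨j, (hmemJ j).2 hi, rfl⟩
        · rintro ⟨j, hjJ, rfl⟩
          exact (hmemJ j).1 hjJ
      rw [hI, Finset.prod_map]
      simp

end FTAux

/-- For the free tree monoid on `X = {x₁ < ⋯ < xₙ}` (indexed by `Fin n`, so `x_{i+1} = ftGen i`),
the right descent class of `I ⊆ {1,…,n}` has cardinality `∏_{i ∈ I} a(i−1)`; in particular the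
minimal ideal, consisting of the elements whose right descent set is all of `{1,…,n}`, has
cardinality `a(0)·a(1)⋯a(n−1) = a(1)⋯a(n−1)`. -/
theorem freeTreeMonoid_descentClass_card (n : ℕ) :
    (∀ I : Finset (Fin n),
      Nat.card {u : FreeTreeMonoid (Fin n) // ∀ i : Fin n, u * ftGen i = u ↔ i ∈ I} =
        ∏ i ∈ I, ftCount i.val) ∧
    Nat.card {u : FreeTreeMonoid (Fin n) // ∀ i : Fin n, u * ftGen i = u} =
      ∏ i : Fin n, ftCount i.val := by
  refine ⟨fun I => FTAux.descent_card n I, ?_⟩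
  have e : {u : FreeTreeMonoid (Fin n) // ∀ i : Fin n, u * ftGen i = u} ≃
      {u : FreeTreeMonoid (Fin n) // ∀ i : Fin n, u * ftGen i = u ↔
        i ∈ (Finset.univ : Finset (Fin n))} :=
    Equiv.subtypeEquivRight (by intro u; simp)
  rw [Nat.card_congr e, FTAux.descent_card n Finset.univ]
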